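/- Let H be a separable Hilbert space, (X,μ) a measure space, 0 < p₀ < p₁ < ∞, and φ : B_{p₀}(H) + B_{p₁}(H) → L⁰(X,μ) a sublinear operator such that ‖φ(T)‖_{L^{p_i,∞}(μ)} ≤ C_i ‖T‖_{B_{p_i}(H)} for all T ∈ B_{p_i}(H), i = 0,1. Then for every p with p₀ < p < p₁ there exists a constant C > 0 such that ‖φ(T)‖_{L^p(μ)} ≤ C ‖T‖_{B_p(H)} for all T ∈ B_p(H). -/

import Mathlib

open MeasureTheory
open scoped ENNReal

variable {H : Type*} [NormedAddCommGroup H] [InnerProductSpace ℂ H] [CompleteSpace H]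

/-- The `n`-th approximation number (= `(n+1)`-st singular value for compact
operators on a Hilbert space). -/
noncomputable def appNumber (T : H →L[ℂ] H) (n : ℕ) : ℝ :=
  sInf {r : ℝ | ∃ F : H →L[ℂ] H,
    FiniteDimensional ℂ (LinearMap.range (F : H →ₗ[ℂ] H)) ∧
    Module.finrank ℂ (LinearMap.range (F : H →ₗ[ℂ] H)) ≤ n ∧ ‖T - F‖ = r}

/-- The Schatten `p`-norm `(∑ₙ Sₙ(T)^p)^(1/p)` (valued in `ℝ≥0∞`). -/
noncomputable def schattenNorm (p : ℝ) (T : H →L[ℂ] H) : ℝ≥0∞ :=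
  (∑' n : ℕ, ENNReal.ofReal (appNumber T n) ^ p) ^ (1 / p)

/-! ### Auxiliary facts about approximation numbers -/

set_option linter.unusedSectionVars false

private def schAppSet (T : H →L[ℂ] H) (n : ℕ) : Set ℝ :=
  {r : ℝ | ∃ F : H →L[ℂ] H,
    FiniteDimensional ℂ (LinearMap.range (F : H →ₗ[ℂ] H)) ∧
    Module.finrank ℂ (LinearMap.range (F : H →ₗ[ℂ] H)) ≤ n ∧ ‖T - F‖ = r}

private lemma schAppNumber_eq (T : H →L[ℂ] H) (n : ℕ) :
    appNumber T n = sInf (schAppSet T n) := rfl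

private lemma sch_zero_mem_aux (T : H →L[ℂ] H) (n : ℕ) : ‖T‖ ∈ schAppSet T n := by
  refine ⟨0, ?_, ?_, by simp⟩
  · rw [show ((0 : H →L[ℂ] H) : H →ₗ[ℂ] H) = 0 from rfl, LinearMap.range_zero]
    infer_instance
  · rw [show ((0 : H →L[ℂ] H) : H →ₗ[ℂ] H) = 0 from rfl, LinearMap.range_zero, finrank_bot]
    exact Nat.zero_le n

private lemma schAppSet_nonempty (T : H →L[ℂ] H) (n : ℕ) : (schAppSet T n).Nonempty :=
  ⟨‖T‖, sch_zero_mem_aux T n⟩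

private lemma schAppSet_bddBelow (T : H →L[ℂ] H) (n : ℕ) : BddBelow (schAppSet T n) :=
  ⟨0, by rintro r ⟨F, -, -, rfl⟩; exact norm_nonneg _⟩

private lemma schAppNumber_nonneg (T : H →L[ℂ] H) (n : ℕ) : 0 ≤ appNumber T n :=
  le_csInf (schAppSet_nonempty T n) (by rintro r ⟨F, -, -, rfl⟩; exact norm_nonneg _)

private lemma schAppNumber_le {T F : H →L[ℂ] H} {n : ℕ}
    (h1 : FiniteDimensional ℂ (LinearMap.range (F : H →ₗ[ℂ] H)))
    (h2 : Module.finrank ℂ (LinearMap.range (F : H →ₗ[ℂ] H)) ≤ n) :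
    appNumber T n ≤ ‖T - F‖ :=
  csInf_le (schAppSet_bddBelow T n) ⟨F, h1, h2, rfl⟩

private lemma schAppNumber_le_norm (T : H →L[ℂ] H) (n : ℕ) : appNumber T n ≤ ‖T‖ :=
  csInf_le (schAppSet_bddBelow T n) (sch_zero_mem_aux T n)

private lemma schAppNumber_antitone (T : H →L[ℂ] H) : Antitone (appNumber T) := by
  intro m n hmn
  exact csInf_le_csInf (schAppSet_bddBelow T n) (schAppSet_nonempty T m)
    (by rintro r ⟨F, h1, h2, rfl⟩; exact ⟨F, h1, h2.trans hmn, rfl⟩)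

private lemma sch_exists_app_approx (T : H →L[ℂ] H) (n : ℕ) {ε : ℝ} (hε : 0 < ε) :
    ∃ F : H →L[ℂ] H, FiniteDimensional ℂ (LinearMap.range (F : H →ₗ[ℂ] H)) ∧
      Module.finrank ℂ (LinearMap.range (F : H →ₗ[ℂ] H)) ≤ n ∧
      ‖T - F‖ < appNumber T n + ε := by
  obtain ⟨r, hr, hrlt⟩ := Real.lt_sInf_add_pos (schAppSet_nonempty T n) hε
  obtain ⟨F, h1, h2, rfl⟩ := hr
  exact ⟨F, h1, h2, hrlt⟩

private lemma schAppNumber_triangle (S T : H →L[ℂ] H) (n : ℕ) :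
    appNumber S n ≤ appNumber T n + ‖S - T‖ := by
  rw [schAppNumber_eq T n, ← sub_le_iff_le_add]
  refine le_csInf (schAppSet_nonempty T n) ?_
  rintro r ⟨F, h1, h2, rfl⟩
  have h3 : appNumber S n ≤ ‖S - F‖ := schAppNumber_le h1 h2
  have h4 : ‖S - F‖ ≤ ‖S - T‖ + ‖T - F‖ := by
    calc ‖S - F‖ = ‖(S - T) + (T - F)‖ := by abel_nf
    _ ≤ ‖S - T‖ + ‖T - F‖ := norm_add_le _ _
  linarith

private lemma schAppNumber_rank_zero {F : H →L[ℂ] H} {k : ℕ}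
    (h1 : FiniteDimensional ℂ (LinearMap.range (F : H →ₗ[ℂ] H)))
    (h2 : Module.finrank ℂ (LinearMap.range (F : H →ₗ[ℂ] H)) ≤ k) :
    appNumber F k = 0 :=
  le_antisymm (by simpa using schAppNumber_le (T := F) h1 h2) (schAppNumber_nonneg F k)

private lemma schAppNumber_sub_rank {T F : H →L[ℂ] H} {N : ℕ}
    (h1 : FiniteDimensional ℂ (LinearMap.range (F : H →ₗ[ℂ] H)))
    (h2 : Module.finrank ℂ (LinearMap.range (F : H →ₗ[ℂ] H)) ≤ N) (m : ℕ) :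
    appNumber (T - F) (m + N) ≤ appNumber T m := by
  rw [schAppNumber_eq T m]
  refine le_csInf (schAppSet_nonempty T m) ?_
  rintro r ⟨G, hg1, hg2, rfl⟩
  have hrange : LinearMap.range ((G - F : H →L[ℂ] H) : H →ₗ[ℂ] H) ≤
      LinearMap.range (G : H →ₗ[ℂ] H) ⊔ LinearMap.range (F : H →ₗ[ℂ] H) := by
    rintro x ⟨y, rfl⟩
    exact Submodule.mem_sup.2
      ⟨G y, ⟨y, rfl⟩, -(F y), Submodule.neg_mem _ ⟨y, rfl⟩, by simp [sub_eq_add_neg]⟩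
  haveI := hg1
  haveI : FiniteDimensional ℂ
      ↥(LinearMap.range (G : H →ₗ[ℂ] H) ⊔ LinearMap.range (F : H →ₗ[ℂ] H)) :=
    Submodule.finiteDimensional_sup _ _
  haveI : FiniteDimensional ℂ (LinearMap.range ((G - F : H →L[ℂ] H) : H →ₗ[ℂ] H)) :=
    Submodule.finiteDimensional_of_le hrange
  have hrk : Module.finrank ℂ (LinearMap.range ((G - F : H →L[ℂ] H) : H →ₗ[ℂ] H)) ≤ m + N := by
    calc Module.finrank ℂ (LinearMap.range ((G - F : H →L[ℂ] H) : H →ₗ[ℂ] H))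
        ≤ Module.finrank ℂ
          ↥(LinearMap.range (G : H →ₗ[ℂ] H) ⊔ LinearMap.range (F : H →ₗ[ℂ] H)) :=
          Submodule.finrank_mono hrange
      _ ≤ Module.finrank ℂ (LinearMap.range (G : H →ₗ[ℂ] H)) +
          Module.finrank ℂ (LinearMap.range (F : H →ₗ[ℂ] H)) :=
          Submodule.finrank_add_le_finrank_add_finrank _ _
      _ ≤ m + N := Nat.add_le_add hg2 h2
  have h5 := schAppNumber_le (T := T - F) (F := G - F) (n := m + N) ‹_› hrk
  calc appNumber (T - F) (m + N) ≤ ‖(T - F) - (G - F)‖ := h5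
    _ = ‖T - G‖ := by abel_nf

private lemma sch_isCompactOperator_of_finiteRank {F : H →L[ℂ] H}
    (h : FiniteDimensional ℂ (LinearMap.range (F : H →ₗ[ℂ] H))) :
    IsCompactOperator ⇑F := by
  set S := LinearMap.range (F : H →ₗ[ℂ] H) with hS
  haveI := h
  haveI : ProperSpace S := FiniteDimensional.proper ℂ S
  refine ⟨Subtype.val '' Metric.closedBall (0 : S) ‖F‖, ?_, ?_⟩
  · exact (isCompact_closedBall _ _).image continuous_subtype_val
  · refine Filter.mem_of_superset (Metric.closedBall_mem_nhds (0 : H) one_pos) ?_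
    intro x hx
    refine ⟨⟨F x, ⟨x, rfl⟩⟩, ?_, rfl⟩
    rw [Metric.mem_closedBall, dist_zero_right]
    have h1 : ‖F x‖ ≤ ‖F‖ * ‖x‖ := F.le_opNorm x
    have h2 : ‖x‖ ≤ 1 := by simpa [dist_zero_right] using hx
    have h3 : ‖(⟨F x, ⟨x, rfl⟩⟩ : S)‖ = ‖F x‖ := rfl
    rw [h3]
    nlinarith [norm_nonneg (F : H →L[ℂ] H), norm_nonneg x]

/-! ### ENNReal dyadic / geometric series helpers -/

private lemma sm2_ne_zero : (2:ℝ≥0∞) ≠ 0 := by norm_num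
private lemma sm2_ne_top : (2:ℝ≥0∞) ≠ ⊤ := by norm_num

private lemma e2_ofReal (x : ℝ) : (2:ℝ≥0∞) ^ x = ENNReal.ofReal ((2:ℝ) ^ x) := by
  rw [← ENNReal.ofReal_rpow_of_pos two_pos, ENNReal.ofReal_ofNat]

private lemma e2_ne_top (x : ℝ) : (2:ℝ≥0∞) ^ x ≠ ⊤ := by
  rw [e2_ofReal]; exact ENNReal.ofReal_ne_top

private lemma e2_zpow (j : ℤ) : ENNReal.ofReal ((2:ℝ) ^ j) = (2:ℝ≥0∞) ^ (j:ℝ) := by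
  rw [e2_ofReal, Real.rpow_intCast]

private lemma e2_mul (x y : ℝ) : (2:ℝ≥0∞)^x * (2:ℝ≥0∞)^y = (2:ℝ≥0∞)^(x+y) :=
  (ENNReal.rpow_add x y sm2_ne_zero sm2_ne_top).symm

private lemma e2_inv (x : ℝ) : ((2:ℝ≥0∞)^x)⁻¹ = (2:ℝ≥0∞)^(-x) :=
  (ENNReal.rpow_neg 2 x).symm ▸ rfl

private lemma e2_rpow (x y : ℝ) : ((2:ℝ≥0∞)^x)^y = (2:ℝ≥0∞)^(x*y) :=
  (ENNReal.rpow_mul 2 x y).symm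

private lemma sch_geom_le_aux (r : ℝ) (J : ℤ) :
    ∑' j : ℤ, (if j ≤ J then (2:ℝ≥0∞) ^ ((j:ℝ)*r) else 0)
      ≤ (2:ℝ≥0∞)^((J:ℝ)*r) * (1 - (2:ℝ≥0∞)^(-r))⁻¹ := by
  rw [ENNReal.tsum_eq_iSup_sum]
  refine iSup_le fun s => ?_
  rw [← Finset.sum_filter]
  set t := s.filter (· ≤ J) with ht
  have hsum : ∑ j ∈ t, (2:ℝ≥0∞) ^ ((j:ℝ)*r)
      = ∑ i ∈ t.image (fun j => (J - j).toNat), (2:ℝ≥0∞) ^ (((J:ℝ) - i)*r) := by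
    rw [Finset.sum_image]
    · refine Finset.sum_congr rfl fun j hj => ?_
      have hjJ : j ≤ J := by simpa [ht] using (Finset.mem_filter.1 hj).2
      congr 2
      have h1 : ((J - j).toNat : ℤ) = J - j := Int.toNat_of_nonneg (by omega)
      have h2 : ((J - j).toNat : ℝ) = (J:ℝ) - j := by exact_mod_cast h1
      rw [h2]; ring
    · intro a ha b hb hab
      have haJ : a ≤ J := by simpa [ht] using (Finset.mem_filter.1 ha).2
      have hbJ : b ≤ J := by simpa [ht] using (Finset.mem_filter.1 hb).2
      simp only at hab; omega
  rw [hsum]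
  calc ∑ i ∈ t.image (fun j => (J - j).toNat), (2:ℝ≥0∞) ^ (((J:ℝ) - i)*r)
      ≤ ∑' i : ℕ, (2:ℝ≥0∞) ^ (((J:ℝ) - i)*r) := ENNReal.sum_le_tsum _
    _ = ∑' i : ℕ, (2:ℝ≥0∞)^((J:ℝ)*r) * ((2:ℝ≥0∞)^(-r))^(i:ℕ) := by
        refine tsum_congr fun i => ?_
        rw [← ENNReal.rpow_natCast ((2:ℝ≥0∞)^(-r)) i, ← ENNReal.rpow_mul,
          ← ENNReal.rpow_add _ _ sm2_ne_zero sm2_ne_top]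
        congr 1; ring
    _ = (2:ℝ≥0∞)^((J:ℝ)*r) * (1 - (2:ℝ≥0∞)^(-r))⁻¹ := by
        rw [ENNReal.tsum_mul_left, ENNReal.tsum_geometric]

private lemma sch_geom_ge_aux (r : ℝ) (J : ℤ) :
    ∑' j : ℤ, (if J ≤ j then (2:ℝ≥0∞) ^ ((j:ℝ)*r) else 0)
      ≤ (2:ℝ≥0∞)^((J:ℝ)*r) * (1 - (2:ℝ≥0∞)^r)⁻¹ := by
  rw [ENNReal.tsum_eq_iSup_sum]
  refine iSup_le fun s => ?_
  rw [← Finset.sum_filter]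
  set t := s.filter (J ≤ ·) with ht
  have hsum : ∑ j ∈ t, (2:ℝ≥0∞) ^ ((j:ℝ)*r)
      = ∑ i ∈ t.image (fun j => (j - J).toNat), (2:ℝ≥0∞) ^ (((J:ℝ) + i)*r) := by
    rw [Finset.sum_image]
    · refine Finset.sum_congr rfl fun j hj => ?_
      have hjJ : J ≤ j := by simpa [ht] using (Finset.mem_filter.1 hj).2
      congr 2
      have h1 : ((j - J).toNat : ℤ) = j - J := Int.toNat_of_nonneg (by omega)
      have h2 : ((j - J).toNat : ℝ) = (j:ℝ) - J := by exact_mod_cast h1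
      rw [h2]; ring
    · intro a ha b hb hab
      have haJ : J ≤ a := by simpa [ht] using (Finset.mem_filter.1 ha).2
      have hbJ : J ≤ b := by simpa [ht] using (Finset.mem_filter.1 hb).2
      simp only at hab; omega
  rw [hsum]
  calc ∑ i ∈ t.image (fun j => (j - J).toNat), (2:ℝ≥0∞) ^ (((J:ℝ) + i)*r)
      ≤ ∑' i : ℕ, (2:ℝ≥0∞) ^ (((J:ℝ) + i)*r) := ENNReal.sum_le_tsum _
    _ = ∑' i : ℕ, (2:ℝ≥0∞)^((J:ℝ)*r) * ((2:ℝ≥0∞)^r)^(i:ℕ) := by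
        refine tsum_congr fun i => ?_
        rw [← ENNReal.rpow_natCast ((2:ℝ≥0∞)^r) i, ← ENNReal.rpow_mul,
          ← ENNReal.rpow_add _ _ sm2_ne_zero sm2_ne_top]
        congr 1; ring
    _ = (2:ℝ≥0∞)^((J:ℝ)*r) * (1 - (2:ℝ≥0∞)^r)⁻¹ := by
        rw [ENNReal.tsum_mul_left, ENNReal.tsum_geometric]

private lemma sch_geom_lt_sum {r : ℝ} (hr : 0 < r) (c : ℝ) :
    ∑' j : ℤ, (if (2:ℝ)^j < c then (2:ℝ≥0∞)^((j:ℝ)*r) else 0)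
      ≤ ENNReal.ofReal c ^ r * (1 - (2:ℝ≥0∞)^(-r))⁻¹ := by
  by_cases hc : 0 < c
  · obtain ⟨J, hJ1, hJ2⟩ := exists_mem_Ioc_zpow hc one_lt_two
    calc ∑' j : ℤ, (if (2:ℝ)^j < c then (2:ℝ≥0∞)^((j:ℝ)*r) else 0)
        ≤ ∑' j : ℤ, (if j ≤ J then (2:ℝ≥0∞)^((j:ℝ)*r) else 0) := by
          refine ENNReal.tsum_le_tsum fun j => ?_
          by_cases h1 : (2:ℝ)^j < c
          · rw [if_pos h1, if_pos]
            by_contra hjJ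
            have h3 : (2:ℝ)^(J+1) ≤ (2:ℝ)^j :=
              zpow_le_zpow_right₀ (one_le_two : (1:ℝ) ≤ 2) (by omega)
            linarith [hJ2]
          · rw [if_neg h1]; exact zero_le
      _ ≤ (2:ℝ≥0∞)^((J:ℝ)*r) * (1 - (2:ℝ≥0∞)^(-r))⁻¹ := sch_geom_le_aux r J
      _ ≤ ENNReal.ofReal c ^ r * (1 - (2:ℝ≥0∞)^(-r))⁻¹ := by
          gcongr
          rw [ENNReal.rpow_mul, ← e2_zpow]
          exact ENNReal.rpow_le_rpow (ENNReal.ofReal_le_ofReal hJ1.le) hr.le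
  · have hz : ∀ j : ℤ, (if (2:ℝ)^j < c then (2:ℝ≥0∞)^((j:ℝ)*r) else 0) = 0 := by
      intro j
      rw [if_neg]
      intro h
      exact hc (lt_trans (zpow_pos two_pos j) h)
    simp only [hz, tsum_zero]
    exact zero_le

private lemma sch_geom_ge_sum {r : ℝ} (hr : r < 0) {c : ℝ} (hc : 0 < c) :
    ∑' j : ℤ, (if c ≤ (2:ℝ)^j then (2:ℝ≥0∞)^((j:ℝ)*r) else 0)
      ≤ ENNReal.ofReal c ^ r * (1 - (2:ℝ≥0∞)^r)⁻¹ := by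
  obtain ⟨J, hJ1, hJ2⟩ := exists_mem_Ioc_zpow hc one_lt_two
  calc ∑' j : ℤ, (if c ≤ (2:ℝ)^j then (2:ℝ≥0∞)^((j:ℝ)*r) else 0)
      ≤ ∑' j : ℤ, (if J + 1 ≤ j then (2:ℝ≥0∞)^((j:ℝ)*r) else 0) := by
        refine ENNReal.tsum_le_tsum fun j => ?_
        by_cases h1 : c ≤ (2:ℝ)^j
        · rw [if_pos h1, if_pos]
          by_contra hjJ
          have h3 : (2:ℝ)^j ≤ (2:ℝ)^J :=
            zpow_le_zpow_right₀ (one_le_two : (1:ℝ) ≤ 2) (by omega)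
          linarith [hJ1]
        · rw [if_neg h1]; exact zero_le
    _ ≤ (2:ℝ≥0∞)^(((J+1:ℤ):ℝ)*r) * (1 - (2:ℝ≥0∞)^r)⁻¹ := sch_geom_ge_aux r (J+1)
    _ ≤ ENNReal.ofReal c ^ r * (1 - (2:ℝ≥0∞)^r)⁻¹ := by
        gcongr
        have h1 : ENNReal.ofReal c ≤ (2:ℝ≥0∞)^(((J+1:ℤ):ℝ)) := by
          rw [← e2_zpow]
          exact ENNReal.ofReal_le_ofReal hJ2
        have h2 : ENNReal.ofReal c ^ (-r) ≤ ((2:ℝ≥0∞)^(((J+1:ℤ):ℝ)))^(-r) :=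
          ENNReal.rpow_le_rpow h1 (by linarith)
        calc (2:ℝ≥0∞)^(((J+1:ℤ):ℝ)*r) = (((2:ℝ≥0∞)^(((J+1:ℤ):ℝ)))^(-r))⁻¹ := by
              rw [← ENNReal.rpow_neg, ← ENNReal.rpow_mul]
              congr 1; ring
          _ ≤ (ENNReal.ofReal c ^ (-r))⁻¹ := ENNReal.inv_le_inv.2 h2
          _ = ENNReal.ofReal c ^ r := by rw [← ENNReal.rpow_neg, neg_neg]

private lemma sch_dyadic_pointwise {p : ℝ} (hp : 0 < p) (v : ℝ) :
    ENNReal.ofReal v ^ p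
      ≤ ∑' j : ℤ, (if (2:ℝ)^j < v then (2:ℝ≥0∞) ^ ((j:ℝ)*p + p) else 0) := by
  by_cases hv : 0 < v
  · obtain ⟨J, hJ1, hJ2⟩ := exists_mem_Ioc_zpow hv one_lt_two
    have key : ENNReal.ofReal v ^ p ≤ (2:ℝ≥0∞) ^ ((J:ℝ)*p + p) := by
      have h1 : ENNReal.ofReal v ≤ (2:ℝ≥0∞) ^ ((J:ℝ) + 1) := by
        rw [e2_ofReal]
        apply ENNReal.ofReal_le_ofReal
        rw [show (J:ℝ) + 1 = ((J+1:ℤ):ℝ) by push_cast; ring, Real.rpow_intCast]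
        exact hJ2
      calc ENNReal.ofReal v ^ p ≤ ((2:ℝ≥0∞) ^ ((J:ℝ) + 1)) ^ p :=
            ENNReal.rpow_le_rpow h1 hp.le
        _ = (2:ℝ≥0∞) ^ ((J:ℝ)*p + p) := by
            rw [← ENNReal.rpow_mul]; congr 1; ring
    refine key.trans ?_
    have h2 := ENNReal.le_tsum (f := fun j : ℤ =>
      (if (2:ℝ)^j < v then (2:ℝ≥0∞) ^ ((j:ℝ)*p + p) else 0)) J
    rwa [if_pos hJ1] at h2
  · have h0 : ENNReal.ofReal v = 0 := by
      rw [ENNReal.ofReal_eq_zero]; linarith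
    rw [h0, ENNReal.zero_rpow_of_pos hp]
    exact zero_le

private lemma sch_weak_est {q s : ℝ} (hq : 0 < q) (hs : 0 < s) {m A B : ℝ≥0∞}
    (h : ENNReal.ofReal s * m ^ (1/q) ≤ B * A) :
    m ≤ B ^ q * A ^ q * (ENNReal.ofReal s)⁻¹ ^ q := by
  have hs0 : ENNReal.ofReal s ≠ 0 := by
    simp [ENNReal.ofReal_eq_zero]; linarith
  have hstop : ENNReal.ofReal s ≠ ⊤ := ENNReal.ofReal_ne_top
  have h1 : m ^ (1/q) ≤ B * A * (ENNReal.ofReal s)⁻¹ := by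
    rw [mul_comm, ← ENNReal.le_div_iff_mul_le (Or.inl hs0) (Or.inl hstop)] at h
    rwa [div_eq_mul_inv] at h
  have h2 : (m ^ (1/q)) ^ q ≤ (B * A * (ENNReal.ofReal s)⁻¹) ^ q :=
    ENNReal.rpow_le_rpow h1 hq.le
  rwa [← ENNReal.rpow_mul, one_div, inv_mul_cancel₀ hq.ne', ENNReal.rpow_one,
    ENNReal.mul_rpow_of_nonneg _ _ hq.le, ENNReal.mul_rpow_of_nonneg _ _ hq.le] at h2

set_option maxHeartbeats 2000000 in
/-- Marcinkiewicz interpolation for sublinear operators on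
Schatten classes: if `φ` is sublinear and satisfies weak-type bounds
`‖φ(T)‖_{L^{pᵢ,∞}} ≤ Cᵢ ‖T‖_{B_{pᵢ}}` for `i = 0,1`, then for every
`p₀ < p < p₁` there is `C > 0` with `‖φ(T)‖_{L^p} ≤ C ‖T‖_{B_p}`. -/
theorem schatten_marcinkiewicz [TopologicalSpace.SeparableSpace H]
    {Ω : Type*} [MeasurableSpace Ω] (μ : Measure Ω)
    (p₀ p₁ : ℝ) (hp₀ : 0 < p₀) (hp₀₁ : p₀ < p₁)
    (φ : (H →L[ℂ] H) → Ω → ℝ)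
    (hsub : ∀ T S : H →L[ℂ] H,
      ∀ᵐ x ∂μ, |φ (T + S) x| ≤ |φ T x| + |φ S x|)
    (hhom : ∀ (c : ℂ) (T : H →L[ℂ] H), ∀ᵐ x ∂μ, |φ (c • T) x| = ‖c‖ * |φ T x|)
    (C₀ C₁ : ℝ)
    (hw₀ : ∀ T : H →L[ℂ] H, IsCompactOperator (⇑T) → schattenNorm p₀ T < ⊤ →
      (⨆ (s : ℝ) (_ : 0 < s), ENNReal.ofReal s * (μ {x | s < |φ T x|}) ^ (1 / p₀))
        ≤ ENNReal.ofReal C₀ * schattenNorm p₀ T)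
    (hw₁ : ∀ T : H →L[ℂ] H, IsCompactOperator (⇑T) → schattenNorm p₁ T < ⊤ →
      (⨆ (s : ℝ) (_ : 0 < s), ENNReal.ofReal s * (μ {x | s < |φ T x|}) ^ (1 / p₁))
        ≤ ENNReal.ofReal C₁ * schattenNorm p₁ T) :
    ∀ p : ℝ, p₀ < p → p < p₁ →
      ∃ C : ℝ, 0 < C ∧ ∀ T : H →L[ℂ] H, IsCompactOperator (⇑T) →
        schattenNorm p T < ⊤ →
          (∫⁻ x, ENNReal.ofReal (|φ T x|) ^ p ∂μ) ^ (1 / p)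
            ≤ ENNReal.ofReal C * schattenNorm p T := by
  intro p hpl hpr
  have hp : 0 < p := hp₀.trans hpl
  have hp1 : 0 < p₁ := hp.trans hpr
  -- geometric constants
  have hgeom_fin : ∀ r : ℝ, r < 0 → (1 - (2:ℝ≥0∞)^r)⁻¹ ≠ ⊤ := by
    intro r hr
    have h1 : (2:ℝ≥0∞)^r < (2:ℝ≥0∞)^(0:ℝ) :=
      ENNReal.rpow_lt_rpow_of_exponent_lt (by norm_num : (1:ℝ≥0∞) < 2) sm2_ne_top hr
    rw [ENNReal.rpow_zero] at h1
    have h2 : (1:ℝ≥0∞) - (2:ℝ≥0∞)^r ≠ 0 := fun h0 =>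
      absurd (tsub_eq_zero_iff_le.1 h0) (not_le.2 h1)
    exact ENNReal.inv_ne_top.2 h2
  set Kg0 : ℝ≥0∞ := (1 - (2:ℝ≥0∞)^(-(p - p₀)))⁻¹ with hKg0def
  set Kgp : ℝ≥0∞ := (1 - (2:ℝ≥0∞)^(-p))⁻¹ with hKgpdef
  set Kg1 : ℝ≥0∞ := (1 - (2:ℝ≥0∞)^(p - p₁))⁻¹ with hKg1def
  have hKg0 : Kg0 ≠ ⊤ := hgeom_fin _ (by linarith)
  have hKgp : Kgp ≠ ⊤ := hgeom_fin _ (by linarith)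
  have hKg1 : Kg1 ≠ ⊤ := hgeom_fin _ (by linarith)
  set K₀C : ℝ≥0∞ := (ENNReal.ofReal C₀)^p₀ with hK₀Cdef
  set K₁C : ℝ≥0∞ := (ENNReal.ofReal C₁)^p₁ with hK₁Cdef
  have hK₀C : K₀C ≠ ⊤ := ENNReal.rpow_ne_top_of_nonneg hp₀.le ENNReal.ofReal_ne_top
  have hK₁C : K₁C ≠ ⊤ := ENNReal.rpow_ne_top_of_nonneg hp1.le ENNReal.ofReal_ne_top
  set c₀ : ℝ≥0∞ := (2:ℝ≥0∞)^(p+p₀) * K₀C * (ENNReal.ofReal 3)^p₀ with hc₀def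
  set c₁a : ℝ≥0∞ := (2:ℝ≥0∞)^(p+2*p₁) * K₁C * 2 with hc₁adef
  set c₁b : ℝ≥0∞ := (2:ℝ≥0∞)^(p+p₁) * K₁C with hc₁bdef
  set D : ℝ≥0∞ := c₀ * Kg0 + c₁a * Kgp + c₁b * Kg1 with hDdef
  have hDne : D ≠ ⊤ := by
    have h3 : (ENNReal.ofReal 3 : ℝ≥0∞)^p₀ ≠ ⊤ :=
      ENNReal.rpow_ne_top_of_nonneg hp₀.le ENNReal.ofReal_ne_top
    rw [hDdef, hc₀def, hc₁adef, hc₁bdef]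
    refine ENNReal.add_ne_top.2 ⟨ENNReal.add_ne_top.2 ⟨?_, ?_⟩, ?_⟩
    · exact ENNReal.mul_ne_top (ENNReal.mul_ne_top (ENNReal.mul_ne_top (e2_ne_top _) hK₀C) h3) hKg0
    · exact ENNReal.mul_ne_top (ENNReal.mul_ne_top
        (ENNReal.mul_ne_top (e2_ne_top _) hK₁C) sm2_ne_top) hKgp
    · exact ENNReal.mul_ne_top (ENNReal.mul_ne_top (e2_ne_top _) hK₁C) hKg1
  have hD1p : D ^ (1/p) ≠ ⊤ := ENNReal.rpow_ne_top_of_nonneg (by positivity) hDne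
  refine ⟨(D ^ (1/p)).toReal + 1, by positivity, ?_⟩
  intro T hT hTfin
  -- notation
  set a : ℕ → ℝ := appNumber T with hadef
  set b : ℕ → ℝ≥0∞ := fun n => ENNReal.ofReal (a n) with hbdef
  set Sp : ℝ≥0∞ := ∑' n : ℕ, b n ^ p with hSpdef
  have hschp : schattenNorm p T = Sp ^ (1/p) := rfl
  have hSptop : Sp ≠ ⊤ := by
    intro hcon
    rw [hschp, hcon, ENNReal.top_rpow_of_pos (by positivity)] at hTfin
    exact (lt_irrefl _ hTfin)
  have ha_nonneg : ∀ n, 0 ≤ a n := fun n => schAppNumber_nonneg T n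
  have ha_anti : Antitone a := schAppNumber_antitone T
  -- levels
  set t : ℤ → ℝ := fun j => (2:ℝ)^j with htdef
  have ht : ∀ j, 0 < t j := fun j => zpow_pos two_pos j
  have hNne : ∀ j : ℤ, {n : ℕ | a n ≤ t j}.Nonempty := by
    intro j
    by_contra hcon
    push_neg at hcon
    simp only [Set.eq_empty_iff_forall_notMem, Set.mem_setOf_eq, not_le,
      Set.not_nonempty_iff_eq_empty] at hcon
    have hterm : ∀ n : ℕ, ENNReal.ofReal (t j) ^ p ≤ b n ^ p := by
      intro n
      exact ENNReal.rpow_le_rpow (ENNReal.ofReal_le_ofReal (hcon n).le) hp.le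
    have h1 : (∑' _ : ℕ, ENNReal.ofReal (t j) ^ p) ≤ Sp := ENNReal.tsum_le_tsum hterm
    rw [ENNReal.tsum_const_eq_top_of_ne_zero] at h1
    · exact hSptop (top_le_iff.1 h1)
    · exact (ENNReal.rpow_pos (ENNReal.ofReal_pos.2 (ht j)) ENNReal.ofReal_ne_top).ne'
  set N : ℤ → ℕ := fun j => sInf {n : ℕ | a n ≤ t j} with hNdef
  have hNmem : ∀ j, a (N j) ≤ t j := fun j => Nat.sInf_mem (hNne j)
  have hlt : ∀ j k, k < N j → t j < a k := by
    intro j k hk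
    by_contra hcon
    push_neg at hcon
    exact (Nat.sInf_le hcon).not_gt hk
  have hiff : ∀ j k, t j < a k ↔ k < N j := by
    intro j k
    refine ⟨fun h => ?_, hlt j k⟩
    by_contra hcon
    push_neg at hcon
    exact absurd ((ha_anti hcon).trans (hNmem j)) (not_le.2 h)
  -- near-best approximations
  have hFex : ∀ j : ℤ, ∃ F : H →L[ℂ] H,
      FiniteDimensional ℂ (LinearMap.range (F : H →ₗ[ℂ] H)) ∧
      Module.finrank ℂ (LinearMap.range (F : H →ₗ[ℂ] H)) ≤ N j ∧
      ‖T - F‖ < a (N j) + t j := fun j => sch_exists_app_approx T (N j) (ht j)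
  choose F hFd hFr hFn using hFex
  set R : ℤ → (H →L[ℂ] H) := fun j => T - F j with hRdef
  have hRnorm : ∀ j, ‖R j‖ ≤ 2 * t j := by
    intro j
    have := hFn j
    have h2 := hNmem j
    simp only [hRdef]
    linarith
  have happF : ∀ j k, k < N j → appNumber (F j) k ≤ 3 * a k := by
    intro j k hk
    have h1 : appNumber (F j) k ≤ appNumber T k + ‖F j - T‖ := schAppNumber_triangle _ _ k
    have h2 : ‖F j - T‖ = ‖R j‖ := by simp only [hRdef]; exact norm_sub_rev _ _
    have h3 := hRnorm j
    have h4 := hlt j k hk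
    rw [h2] at h1
    have h5 : appNumber T k = a k := rfl
    rw [h5] at h1
    linarith
  have happF0 : ∀ j k, N j ≤ k → appNumber (F j) k = 0 := fun j k hk =>
    schAppNumber_rank_zero (hFd j) ((hFr j).trans hk)
  have happR_le : ∀ j m, appNumber (R j) m ≤ 2 * t j := fun j m =>
    (schAppNumber_le_norm _ m).trans (hRnorm j)
  have happR_shift : ∀ j m, appNumber (R j) (m + N j) ≤ a m := fun j m =>
    schAppNumber_sub_rank (hFd j) (hFr j) m
  have hcF : ∀ j, IsCompactOperator ⇑(F j) := fun j =>
    sch_isCompactOperator_of_finiteRank (hFd j)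
  have hcR : ∀ j, IsCompactOperator ⇑(R j) := by
    intro j
    have h1 : ⇑(R j) = ⇑T - ⇑(F j) := by
      rw [hRdef]; exact ContinuousLinearMap.coe_sub' T (F j)
    rw [h1]
    exact hT.sub (hcF j)
  -- Schatten norm of F j at exponent p₀ is finite
  have hSqF_fin : ∀ j, (∑' k : ℕ, ENNReal.ofReal (appNumber (F j) k) ^ p₀) ≠ ⊤ := by
    intro j
    have h1 : ∀ k ∉ Finset.range (N j), ENNReal.ofReal (appNumber (F j) k) ^ p₀ = 0 := by
      intro k hk
      rw [happF0 j k (not_lt.1 fun h => hk (Finset.mem_range.2 h))]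
      simp [ENNReal.zero_rpow_of_pos hp₀]
    rw [tsum_eq_sum h1]
    refine (ENNReal.sum_lt_top.2 fun k _ => ?_).ne
    exact ENNReal.rpow_lt_top_of_nonneg hp₀.le ENNReal.ofReal_ne_top
  have hschF : ∀ j, schattenNorm p₀ (F j) < ⊤ := fun j =>
    ENNReal.rpow_lt_top_of_nonneg (by positivity) (hSqF_fin j)
  -- the "tail" sums
  set G : ℤ → ℝ≥0∞ :=
    fun j => ∑' m : ℕ, (if t j < a m then 0 else ENNReal.ofReal (a m) ^ p₁) with hGdef
  have hSqR_le : ∀ j, (∑' m : ℕ, ENNReal.ofReal (appNumber (R j) m) ^ p₁)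
      ≤ ((2 * N j : ℕ) : ℝ≥0∞) * (ENNReal.ofReal (2 * t j)) ^ p₁ + G j := by
    intro j
    rw [← Summable.sum_add_tsum_nat_add'
      (f := fun m => ENNReal.ofReal (appNumber (R j) m) ^ p₁) (k := 2 * N j) ENNReal.summable]
    refine add_le_add ?_ ?_
    · calc ∑ i ∈ Finset.range (2 * N j), ENNReal.ofReal (appNumber (R j) i) ^ p₁
          ≤ ∑ _i ∈ Finset.range (2 * N j), (ENNReal.ofReal (2 * t j)) ^ p₁ :=
            Finset.sum_le_sum fun i _ =>
              ENNReal.rpow_le_rpow (ENNReal.ofReal_le_ofReal (happR_le j i)) hp1.le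
        _ = ((2 * N j : ℕ) : ℝ≥0∞) * (ENNReal.ofReal (2 * t j)) ^ p₁ := by
            rw [Finset.sum_const, Finset.card_range, nsmul_eq_mul]
    · have hterm : ∀ i : ℕ, ENNReal.ofReal (appNumber (R j) (i + 2 * N j)) ^ p₁
          ≤ (fun m => if t j < a m then 0 else ENNReal.ofReal (a m) ^ p₁) (i + N j) := by
        intro i
        have h1 : appNumber (R j) (i + 2 * N j) ≤ a (i + N j) := by
          have := happR_shift j (i + N j)
          rwa [show (i + N j) + N j = i + 2 * N j by ring] at this
        have h2 : a (i + N j) ≤ t j := (ha_anti (Nat.le_add_left _ _)).trans (hNmem j)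
        simp only [not_lt.2 h2, if_neg (not_lt.2 h2)]
        exact ENNReal.rpow_le_rpow (ENNReal.ofReal_le_ofReal h1) hp1.le
      calc ∑' i : ℕ, ENNReal.ofReal (appNumber (R j) (i + 2 * N j)) ^ p₁
          ≤ ∑' i : ℕ, (fun m => if t j < a m then 0 else ENNReal.ofReal (a m) ^ p₁) (i + N j) :=
            ENNReal.tsum_le_tsum hterm
        _ ≤ G j := by
            rw [hGdef]
            simp only
            exact le_add_self.trans_eq (Summable.sum_add_tsum_nat_add'
              (f := fun m => if t j < a m then 0 else ENNReal.ofReal (a m) ^ p₁)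
              (k := N j) ENNReal.summable)
  have hG_le : ∀ j, G j ≤ ENNReal.ofReal (t j) ^ (p₁ - p) * Sp := by
    intro j
    rw [hGdef, hSpdef, ← ENNReal.tsum_mul_left]
    refine ENNReal.tsum_le_tsum fun m => ?_
    by_cases hm : t j < a m
    · rw [if_pos hm]; exact zero_le
    · rw [if_neg hm]
      push_neg at hm
      have h1 : ENNReal.ofReal (a m) ^ p₁
          = ENNReal.ofReal (a m) ^ (p₁ - p) * ENNReal.ofReal (a m) ^ p := by
        rw [← ENNReal.rpow_add_of_nonneg _ _ (by linarith) hp.le, sub_add_cancel]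
      rw [h1]
      exact mul_le_mul_left
        (ENNReal.rpow_le_rpow (ENNReal.ofReal_le_ofReal hm) (by linarith)) _
  have hSqR_fin : ∀ j, (∑' m : ℕ, ENNReal.ofReal (appNumber (R j) m) ^ p₁) ≠ ⊤ := by
    intro j
    refine ne_top_of_le_ne_top ?_ (hSqR_le j)
    refine ENNReal.add_ne_top.2 ⟨ENNReal.mul_ne_top (ENNReal.natCast_ne_top _)
      (ENNReal.rpow_ne_top_of_nonneg hp1.le ENNReal.ofReal_ne_top), ?_⟩
    exact ne_top_of_le_ne_top (ENNReal.mul_ne_top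
      (ENNReal.rpow_ne_top_of_nonneg (by linarith) ENNReal.ofReal_ne_top) hSptop) (hG_le j)
  have hschR : ∀ j, schattenNorm p₁ (R j) < ⊤ := fun j =>
    ENNReal.rpow_lt_top_of_nonneg (by positivity) (hSqR_fin j)
  -- weak type estimates
  have hU : ∀ j, μ {x | t j / 2 < |φ (F j) x|}
      ≤ K₀C * (∑' k : ℕ, ENNReal.ofReal (appNumber (F j) k) ^ p₀)
        * ((ENNReal.ofReal (t j / 2))⁻¹) ^ p₀ := by
    intro j
    have hs2 : 0 < t j / 2 := by have := ht j; linarith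
    have h1 : ENNReal.ofReal (t j / 2) * (μ {x | t j / 2 < |φ (F j) x|}) ^ (1/p₀)
        ≤ ENNReal.ofReal C₀ * schattenNorm p₀ (F j) := by
      refine le_trans ?_ (hw₀ (F j) (hcF j) (hschF j))
      exact le_iSup_of_le (t j / 2) (le_iSup_of_le hs2 le_rfl)
    have h2 := sch_weak_est hp₀ hs2 h1
    have h3 : (schattenNorm p₀ (F j)) ^ p₀
        = ∑' k : ℕ, ENNReal.ofReal (appNumber (F j) k) ^ p₀ := by
      rw [schattenNorm, ← ENNReal.rpow_mul, one_div, inv_mul_cancel₀ hp₀.ne',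
        ENNReal.rpow_one]
    rwa [h3, ← hK₀Cdef] at h2
  have hV : ∀ j, μ {x | t j / 2 < |φ (R j) x|}
      ≤ K₁C * (∑' m : ℕ, ENNReal.ofReal (appNumber (R j) m) ^ p₁)
        * ((ENNReal.ofReal (t j / 2))⁻¹) ^ p₁ := by
    intro j
    have hs2 : 0 < t j / 2 := by have := ht j; linarith
    have h1 : ENNReal.ofReal (t j / 2) * (μ {x | t j / 2 < |φ (R j) x|}) ^ (1/p₁)
        ≤ ENNReal.ofReal C₁ * schattenNorm p₁ (R j) := by
      refine le_trans ?_ (hw₁ (R j) (hcR j) (hschR j))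
      exact le_iSup_of_le (t j / 2) (le_iSup_of_le hs2 le_rfl)
    have h2 := sch_weak_est hp1 hs2 h1
    have h3 : (schattenNorm p₁ (R j)) ^ p₁
        = ∑' m : ℕ, ENNReal.ofReal (appNumber (R j) m) ^ p₁ := by
      rw [schattenNorm, ← ENNReal.rpow_mul, one_div, inv_mul_cancel₀ hp1.ne',
        ENNReal.rpow_one]
    rwa [h3, ← hK₁Cdef] at h2
  -- weight and pieces
  set w : ℤ → ℝ≥0∞ := fun j => (2:ℝ≥0∞) ^ ((j:ℝ)*p + p) with hwdef
  set P₀ : ℤ → ℝ≥0∞ := fun j => c₀ * ∑' k : ℕ,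
    (if t j < a k then (2:ℝ≥0∞)^((j:ℝ)*(p-p₀)) * ENNReal.ofReal (a k) ^ p₀ else 0) with hP₀def
  set P₁a : ℤ → ℝ≥0∞ := fun j => c₁a * ∑' k : ℕ,
    (if t j < a k then (2:ℝ≥0∞)^((j:ℝ)*p) else 0) with hP₁adef
  set P₁b : ℤ → ℝ≥0∞ := fun j => c₁b * ∑' k : ℕ,
    (if t j < a k then 0 else (2:ℝ≥0∞)^((j:ℝ)*(p-p₁)) * ENNReal.ofReal (a k) ^ p₁) with hP₁bdef
  have hof : ∀ j : ℤ, ENNReal.ofReal (t j / 2) = (2:ℝ≥0∞)^((j:ℝ)-1) := by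
    intro j
    have h1 : t j / 2 = (2:ℝ)^(j-1 : ℤ) := by
      rw [htdef]
      simp only
      rw [zpow_sub_one₀ (two_ne_zero) j]
      ring
    rw [h1, e2_zpow]
    congr 1
    push_cast
    ring
  have hX : ∀ (q : ℝ) (j : ℤ), ((ENNReal.ofReal (t j / 2))⁻¹) ^ q
      = (2:ℝ≥0∞)^((1-(j:ℝ))*q) := by
    intro q j
    rw [hof, e2_inv, e2_rpow]
    congr 1
    ring
  -- per-level bound
  have hstep0 : ∀ j, w j * μ {x | t j / 2 < |φ (F j) x|} ≤ P₀ j := by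
    intro j
    have hSqF_le : (∑' k : ℕ, ENNReal.ofReal (appNumber (F j) k) ^ p₀)
        ≤ (ENNReal.ofReal 3)^p₀ * ∑' k : ℕ,
          (if t j < a k then ENNReal.ofReal (a k) ^ p₀ else 0) := by
      rw [← ENNReal.tsum_mul_left]
      refine ENNReal.tsum_le_tsum fun k => ?_
      by_cases hk : t j < a k
      · rw [if_pos hk]
        calc ENNReal.ofReal (appNumber (F j) k) ^ p₀
            ≤ ENNReal.ofReal (3 * a k) ^ p₀ :=
              ENNReal.rpow_le_rpow
                (ENNReal.ofReal_le_ofReal (happF j k ((hiff j k).1 hk))) hp₀.le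
          _ = (ENNReal.ofReal 3)^p₀ * ENNReal.ofReal (a k) ^ p₀ := by
              rw [ENNReal.ofReal_mul (by norm_num : (0:ℝ) ≤ 3),
                ENNReal.mul_rpow_of_nonneg _ _ hp₀.le]
      · rw [if_neg hk, happF0 j k]
        · simp [ENNReal.zero_rpow_of_pos hp₀]
        · by_contra hcon
          exact hk (hlt j k (not_le.1 hcon))
    calc w j * μ {x | t j / 2 < |φ (F j) x|}
        ≤ w j * (K₀C * ((ENNReal.ofReal 3)^p₀ * ∑' k : ℕ,
            (if t j < a k then ENNReal.ofReal (a k) ^ p₀ else 0))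
            * ((ENNReal.ofReal (t j / 2))⁻¹) ^ p₀) := by
          refine mul_le_mul_right ((hU j).trans ?_) _
          exact mul_le_mul_left (mul_le_mul_right hSqF_le _) _
      _ = P₀ j := by
          rw [hX p₀ j, hP₀def]
          simp only
          have hcollect : w j * (2:ℝ≥0∞)^((1-(j:ℝ))*p₀)
              = (2:ℝ≥0∞)^(p+p₀) * (2:ℝ≥0∞)^((j:ℝ)*(p-p₀)) := by
            rw [hwdef]
            simp only
            rw [e2_mul, e2_mul]
            congr 1
            ring
          calc w j * (K₀C * ((ENNReal.ofReal 3)^p₀ * ∑' k : ℕ,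
                (if t j < a k then ENNReal.ofReal (a k) ^ p₀ else 0))
                * (2:ℝ≥0∞)^((1-(j:ℝ))*p₀))
              = (w j * (2:ℝ≥0∞)^((1-(j:ℝ))*p₀)) * (K₀C * (ENNReal.ofReal 3)^p₀)
                * ∑' k : ℕ, (if t j < a k then ENNReal.ofReal (a k) ^ p₀ else 0) := by
                ring
            _ = c₀ * ((2:ℝ≥0∞)^((j:ℝ)*(p-p₀)) * ∑' k : ℕ,
                (if t j < a k then ENNReal.ofReal (a k) ^ p₀ else 0)) := by
                rw [hcollect, hc₀def]; ring
            _ = c₀ * ∑' k : ℕ, (if t j < a k then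
                (2:ℝ≥0∞)^((j:ℝ)*(p-p₀)) * ENNReal.ofReal (a k) ^ p₀ else 0) := by
                rw [← ENNReal.tsum_mul_left]
                congr 1
                refine tsum_congr fun k => ?_
                split_ifs <;> simp
  have hcount : ∀ j, (∑' k : ℕ, (if t j < a k then (2:ℝ≥0∞)^((j:ℝ)*p) else 0))
      = (N j : ℝ≥0∞) * (2:ℝ≥0∞)^((j:ℝ)*p) := by
    intro j
    have h1 : ∀ k ∉ Finset.range (N j),
        (if t j < a k then (2:ℝ≥0∞)^((j:ℝ)*p) else 0) = 0 := by
      intro k hk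
      rw [if_neg]
      intro hcon
      exact (Finset.mem_range.2 ((hiff j k).1 hcon)) |> hk
    rw [tsum_eq_sum h1]
    calc ∑ k ∈ Finset.range (N j), (if t j < a k then (2:ℝ≥0∞)^((j:ℝ)*p) else 0)
        = ∑ _k ∈ Finset.range (N j), (2:ℝ≥0∞)^((j:ℝ)*p) :=
          Finset.sum_congr rfl fun k hk => if_pos (hlt j k (Finset.mem_range.1 hk))
      _ = (N j : ℝ≥0∞) * (2:ℝ≥0∞)^((j:ℝ)*p) := by
          rw [Finset.sum_const, Finset.card_range, nsmul_eq_mul]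
  have hstep1 : ∀ j, w j * μ {x | t j / 2 < |φ (R j) x|} ≤ P₁a j + P₁b j := by
    intro j
    have h2t : ENNReal.ofReal (2 * t j) = (2:ℝ≥0∞)^((j:ℝ)+1) := by
      rw [ENNReal.ofReal_mul (by norm_num : (0:ℝ) ≤ 2), ENNReal.ofReal_ofNat]
      rw [htdef]
      simp only [e2_zpow]
      calc (2:ℝ≥0∞) * (2:ℝ≥0∞)^((j:ℝ)) = (2:ℝ≥0∞)^((1:ℝ)) * (2:ℝ≥0∞)^((j:ℝ)) := by
            rw [ENNReal.rpow_one]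
        _ = (2:ℝ≥0∞)^((j:ℝ)+1) := by rw [e2_mul]; congr 1; ring
    calc w j * μ {x | t j / 2 < |φ (R j) x|}
        ≤ w j * (K₁C * (((2 * N j : ℕ) : ℝ≥0∞) * (ENNReal.ofReal (2 * t j)) ^ p₁ + G j)
            * ((ENNReal.ofReal (t j / 2))⁻¹) ^ p₁) := by
          refine mul_le_mul_right ((hV j).trans ?_) _
          exact mul_le_mul_left (mul_le_mul_right (hSqR_le j) _) _
      _ = w j * (K₁C * (((2 * N j : ℕ) : ℝ≥0∞) * (ENNReal.ofReal (2 * t j)) ^ p₁)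
            * ((ENNReal.ofReal (t j / 2))⁻¹) ^ p₁)
          + w j * (K₁C * G j * ((ENNReal.ofReal (t j / 2))⁻¹) ^ p₁) := by
          ring
      _ ≤ P₁a j + P₁b j := by
          refine add_le_add (le_of_eq ?_) (le_of_eq ?_)
          · rw [hX p₁ j, h2t, e2_rpow, hP₁adef]
            simp only
            rw [hcount j]
            have hcollect : w j * ((2:ℝ≥0∞)^((1-(j:ℝ))*p₁) * (2:ℝ≥0∞)^(((j:ℝ)+1)*p₁))
                = (2:ℝ≥0∞)^(p+2*p₁) * (2:ℝ≥0∞)^((j:ℝ)*p) := by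
              rw [hwdef]
              simp only
              rw [e2_mul, e2_mul, e2_mul]
              congr 1
              ring
            have hNcast : ((2 * N j : ℕ) : ℝ≥0∞) = 2 * (N j : ℝ≥0∞) := by
              push_cast
              ring
            calc w j * (K₁C * (((2 * N j : ℕ) : ℝ≥0∞) * (2:ℝ≥0∞)^(((j:ℝ)+1)*p₁))
                  * (2:ℝ≥0∞)^((1-(j:ℝ))*p₁))
                = (w j * ((2:ℝ≥0∞)^((1-(j:ℝ))*p₁) * (2:ℝ≥0∞)^(((j:ℝ)+1)*p₁)))
                  * K₁C * ((2 * N j : ℕ) : ℝ≥0∞) := by ring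
              _ = c₁a * ((N j : ℝ≥0∞) * (2:ℝ≥0∞)^((j:ℝ)*p)) := by
                  rw [hcollect, hNcast, hc₁adef]; ring
          · rw [hX p₁ j, hP₁bdef]
            simp only
            have hcollect : w j * (2:ℝ≥0∞)^((1-(j:ℝ))*p₁)
                = (2:ℝ≥0∞)^(p+p₁) * (2:ℝ≥0∞)^((j:ℝ)*(p-p₁)) := by
              rw [hwdef]
              simp only
              rw [e2_mul, e2_mul]
              congr 1
              ring
            calc w j * (K₁C * G j * (2:ℝ≥0∞)^((1-(j:ℝ))*p₁))
                = (w j * (2:ℝ≥0∞)^((1-(j:ℝ))*p₁)) * K₁C * G j := by ring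
              _ = c₁b * ((2:ℝ≥0∞)^((j:ℝ)*(p-p₁)) * G j) := by
                  rw [hcollect, hc₁bdef]; ring
              _ = c₁b * ∑' k : ℕ, (if t j < a k then 0
                  else (2:ℝ≥0∞)^((j:ℝ)*(p-p₁)) * ENNReal.ofReal (a k) ^ p₁) := by
                  rw [hGdef]
                  simp only
                  rw [← ENNReal.tsum_mul_left]
                  congr 1
                  refine tsum_congr fun k => ?_
                  split_ifs <;> simp
  -- splitting the measure of level sets
  have hSB : ∀ j, μ {x | t j < |φ T x|}
      ≤ μ {x | t j / 2 < |φ (F j) x|} + μ {x | t j / 2 < |φ (R j) x|} := by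
    intro j
    have hFR : F j + R j = T := by simp only [hRdef]; abel
    have hae := hsub (F j) (R j)
    rw [hFR] at hae
    set B : Set Ω := {x | ¬ (|φ T x| ≤ |φ (F j) x| + |φ (R j) x|)} with hBdef
    have hB : μ B = 0 := by rwa [ae_iff] at hae
    have hsubset : {x | t j < |φ T x|}
        ⊆ ({x | t j / 2 < |φ (F j) x|} ∪ {x | t j / 2 < |φ (R j) x|}) ∪ B := by
      intro x hx
      by_cases hxB : x ∈ B
      · exact Or.inr hxB
      · left
        have hle : |φ T x| ≤ |φ (F j) x| + |φ (R j) x| := not_not.1 hxB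
        by_contra hcon
        rw [Set.mem_union] at hcon
        push_neg at hcon
        obtain ⟨h1, h2⟩ := hcon
        simp only [Set.mem_setOf_eq, not_lt] at h1 h2
        have : (t j : ℝ) < t j := by
          calc t j < |φ T x| := hx
            _ ≤ |φ (F j) x| + |φ (R j) x| := hle
            _ ≤ t j / 2 + t j / 2 := add_le_add h1 h2
            _ = t j := by ring
        exact lt_irrefl _ this
    calc μ {x | t j < |φ T x|}
        ≤ μ (({x | t j / 2 < |φ (F j) x|} ∪ {x | t j / 2 < |φ (R j) x|}) ∪ B) :=
          measure_mono hsubset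
      _ ≤ μ ({x | t j / 2 < |φ (F j) x|} ∪ {x | t j / 2 < |φ (R j) x|}) + μ B :=
          measure_union_le _ _
      _ = μ ({x | t j / 2 < |φ (F j) x|} ∪ {x | t j / 2 < |φ (R j) x|}) := by
          rw [hB, add_zero]
      _ ≤ μ {x | t j / 2 < |φ (F j) x|} + μ {x | t j / 2 < |φ (R j) x|} :=
          measure_union_le _ _
  have hj : ∀ j, w j * μ {x | t j < |φ T x|} ≤ P₀ j + (P₁a j + P₁b j) := by
    intro j
    calc w j * μ {x | t j < |φ T x|}
        ≤ w j * (μ {x | t j / 2 < |φ (F j) x|} + μ {x | t j / 2 < |φ (R j) x|}) :=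
          mul_le_mul_right (hSB j) _
      _ = w j * μ {x | t j / 2 < |φ (F j) x|} + w j * μ {x | t j / 2 < |φ (R j) x|} :=
          mul_add _ _ _
      _ ≤ P₀ j + (P₁a j + P₁b j) := add_le_add (hstep0 j) (hstep1 j)
  -- step A: dyadic decomposition of the integral
  have hhull : ∀ j : ℤ, ∃ M : Set Ω, {x | t j < |φ T x|} ⊆ M ∧ MeasurableSet M ∧
      μ M = μ {x | t j < |φ T x|} := fun j => exists_measurable_superset μ _
  choose M hM1 hM2 hM3 using hhull
  have hstepA : (∫⁻ x, ENNReal.ofReal (|φ T x|) ^ p ∂μ)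
      ≤ ∑' j : ℤ, w j * μ {x | t j < |φ T x|} := by
    have hpt : ∀ x, ENNReal.ofReal (|φ T x|) ^ p
        ≤ ∑' j : ℤ, Set.indicator (M j) (fun _ => w j) x := by
      intro x
      refine (sch_dyadic_pointwise hp _).trans (ENNReal.tsum_le_tsum fun j => ?_)
      by_cases hx : (2:ℝ)^j < |φ T x|
      · rw [if_pos hx]
        have hmem : x ∈ M j := hM1 j (by rw [htdef]; exact hx)
        rw [Set.indicator_of_mem hmem]
      · rw [if_neg hx]
        exact zero_le
    calc (∫⁻ x, ENNReal.ofReal (|φ T x|) ^ p ∂μ)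
        ≤ ∫⁻ x, ∑' j : ℤ, Set.indicator (M j) (fun _ => w j) x ∂μ := lintegral_mono hpt
      _ = ∑' j : ℤ, ∫⁻ x, Set.indicator (M j) (fun _ => w j) x ∂μ :=
          lintegral_tsum fun j => (measurable_const.indicator (hM2 j)).aemeasurable
      _ = ∑' j : ℤ, w j * μ (M j) := by
          refine tsum_congr fun j => ?_
          rw [lintegral_indicator (hM2 j), setLIntegral_const]
      _ = ∑' j : ℤ, w j * μ {x | t j < |φ T x|} := by
          refine tsum_congr fun j => ?_
          rw [hM3 j]
  -- summing the three pieces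
  have hsum0 : ∑' j : ℤ, P₀ j ≤ c₀ * Kg0 * Sp := by
    rw [hP₀def]
    simp only
    rw [ENNReal.tsum_mul_left]
    rw [ENNReal.tsum_comm]
    have hinner : ∀ k : ℕ, (∑' j : ℤ, (if t j < a k then
        (2:ℝ≥0∞)^((j:ℝ)*(p-p₀)) * ENNReal.ofReal (a k) ^ p₀ else 0))
        ≤ Kg0 * ENNReal.ofReal (a k) ^ p := by
      intro k
      have hfact : ∀ j : ℤ, (if t j < a k then
          (2:ℝ≥0∞)^((j:ℝ)*(p-p₀)) * ENNReal.ofReal (a k) ^ p₀ else 0)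
          = (if (2:ℝ)^j < a k then (2:ℝ≥0∞)^((j:ℝ)*(p-p₀)) else 0)
            * ENNReal.ofReal (a k) ^ p₀ := by
        intro j
        rw [htdef]
        simp only
        split_ifs <;> simp
      rw [tsum_congr hfact, ENNReal.tsum_mul_right]
      calc (∑' j : ℤ, (if (2:ℝ)^j < a k then (2:ℝ≥0∞)^((j:ℝ)*(p-p₀)) else 0))
            * ENNReal.ofReal (a k) ^ p₀
          ≤ (ENNReal.ofReal (a k) ^ (p-p₀) * Kg0) * ENNReal.ofReal (a k) ^ p₀ :=
            mul_le_mul_left (sch_geom_lt_sum (by linarith) (a k)) _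
        _ = Kg0 * ENNReal.ofReal (a k) ^ p := by
            rw [show (p:ℝ) = (p - p₀) + p₀ by ring,
              ENNReal.rpow_add_of_nonneg _ _ (by linarith) hp₀.le]
            ring_nf
    calc c₀ * ∑' (k : ℕ), ∑' (j : ℤ), (if t j < a k then
          (2:ℝ≥0∞)^((j:ℝ)*(p-p₀)) * ENNReal.ofReal (a k) ^ p₀ else 0)
        ≤ c₀ * ∑' (k : ℕ), Kg0 * ENNReal.ofReal (a k) ^ p :=
          mul_le_mul_right (ENNReal.tsum_le_tsum hinner) _
      _ = c₀ * Kg0 * Sp := by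
          rw [ENNReal.tsum_mul_left, hSpdef]
          ring
  have hsum1a : ∑' j : ℤ, P₁a j ≤ c₁a * Kgp * Sp := by
    rw [hP₁adef]
    simp only
    rw [ENNReal.tsum_mul_left, ENNReal.tsum_comm]
    have hinner : ∀ k : ℕ, (∑' j : ℤ, (if t j < a k then (2:ℝ≥0∞)^((j:ℝ)*p) else 0))
        ≤ Kgp * ENNReal.ofReal (a k) ^ p := by
      intro k
      have hfact : ∀ j : ℤ, (if t j < a k then (2:ℝ≥0∞)^((j:ℝ)*p) else 0)
          = (if (2:ℝ)^j < a k then (2:ℝ≥0∞)^((j:ℝ)*p) else 0) := by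
        intro j
        rw [htdef]
      rw [tsum_congr hfact]
      calc (∑' j : ℤ, (if (2:ℝ)^j < a k then (2:ℝ≥0∞)^((j:ℝ)*p) else 0))
          ≤ ENNReal.ofReal (a k) ^ p * Kgp := sch_geom_lt_sum hp (a k)
        _ = Kgp * ENNReal.ofReal (a k) ^ p := mul_comm _ _
    calc c₁a * ∑' (k : ℕ), ∑' (j : ℤ), (if t j < a k then (2:ℝ≥0∞)^((j:ℝ)*p) else 0)
        ≤ c₁a * ∑' (k : ℕ), Kgp * ENNReal.ofReal (a k) ^ p :=
          mul_le_mul_right (ENNReal.tsum_le_tsum hinner) _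
      _ = c₁a * Kgp * Sp := by
          rw [ENNReal.tsum_mul_left, hSpdef]
          ring
  have hsum1b : ∑' j : ℤ, P₁b j ≤ c₁b * Kg1 * Sp := by
    rw [hP₁bdef]
    simp only
    rw [ENNReal.tsum_mul_left, ENNReal.tsum_comm]
    have hinner : ∀ k : ℕ, (∑' j : ℤ, (if t j < a k then 0
        else (2:ℝ≥0∞)^((j:ℝ)*(p-p₁)) * ENNReal.ofReal (a k) ^ p₁))
        ≤ Kg1 * ENNReal.ofReal (a k) ^ p := by
      intro k
      have hfact : ∀ j : ℤ, (if t j < a k then 0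
          else (2:ℝ≥0∞)^((j:ℝ)*(p-p₁)) * ENNReal.ofReal (a k) ^ p₁)
          = (if a k ≤ (2:ℝ)^j then (2:ℝ≥0∞)^((j:ℝ)*(p-p₁)) else 0)
            * ENNReal.ofReal (a k) ^ p₁ := by
        intro j
        rw [htdef]
        simp only
        rcases le_or_gt (a k) ((2:ℝ)^j) with h | h
        · rw [if_neg (not_lt.2 h), if_pos h]
        · rw [if_pos h, if_neg (not_le.2 h), zero_mul]
      rw [tsum_congr hfact, ENNReal.tsum_mul_right]
      by_cases hak : 0 < a k
      · calc (∑' j : ℤ, (if a k ≤ (2:ℝ)^j then (2:ℝ≥0∞)^((j:ℝ)*(p-p₁)) else 0))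
              * ENNReal.ofReal (a k) ^ p₁
            ≤ (ENNReal.ofReal (a k) ^ (p-p₁) * Kg1) * ENNReal.ofReal (a k) ^ p₁ :=
              mul_le_mul_left (sch_geom_ge_sum (by linarith) hak) _
          _ = Kg1 * ENNReal.ofReal (a k) ^ p := by
              have hne0 : ENNReal.ofReal (a k) ≠ 0 := (ENNReal.ofReal_pos.2 hak).ne'
              rw [show (p:ℝ) = (p - p₁) + p₁ by ring,
                ENNReal.rpow_add _ _ hne0 ENNReal.ofReal_ne_top]
              ring_nf
      · have hak0 : a k = 0 := le_antisymm (not_lt.1 hak) (ha_nonneg k)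
        have : ENNReal.ofReal (a k) ^ p₁ = 0 := by
          rw [hak0, ENNReal.ofReal_zero, ENNReal.zero_rpow_of_pos hp1]
        rw [this, mul_zero]
        exact zero_le
    calc c₁b * ∑' (k : ℕ), ∑' (j : ℤ), (if t j < a k then 0
          else (2:ℝ≥0∞)^((j:ℝ)*(p-p₁)) * ENNReal.ofReal (a k) ^ p₁)
        ≤ c₁b * ∑' (k : ℕ), Kg1 * ENNReal.ofReal (a k) ^ p :=
          mul_le_mul_right (ENNReal.tsum_le_tsum hinner) _
      _ = c₁b * Kg1 * Sp := by
          rw [ENNReal.tsum_mul_left, hSpdef]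
          ring
  -- final assembly
  have hkey : (∫⁻ x, ENNReal.ofReal (|φ T x|) ^ p ∂μ) ≤ D * Sp := by
    calc (∫⁻ x, ENNReal.ofReal (|φ T x|) ^ p ∂μ)
        ≤ ∑' j : ℤ, w j * μ {x | t j < |φ T x|} := hstepA
      _ ≤ ∑' j : ℤ, (P₀ j + (P₁a j + P₁b j)) := ENNReal.tsum_le_tsum hj
      _ = (∑' j : ℤ, P₀ j) + ((∑' j : ℤ, P₁a j) + (∑' j : ℤ, P₁b j)) := by
          rw [ENNReal.tsum_add, ENNReal.tsum_add]
      _ ≤ c₀ * Kg0 * Sp + (c₁a * Kgp * Sp + c₁b * Kg1 * Sp) :=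
          add_le_add hsum0 (add_le_add hsum1a hsum1b)
      _ = D * Sp := by
          rw [hDdef]
          ring
  calc (∫⁻ x, ENNReal.ofReal (|φ T x|) ^ p ∂μ) ^ (1/p)
      ≤ (D * Sp) ^ (1/p) := ENNReal.rpow_le_rpow hkey (by positivity)
    _ = D ^ (1/p) * Sp ^ (1/p) := ENNReal.mul_rpow_of_nonneg _ _ (by positivity)
    _ ≤ ENNReal.ofReal ((D ^ (1/p)).toReal + 1) * schattenNorm p T := by
        rw [hschp]
        refine mul_le_mul_left ?_ _
        conv_lhs => rw [← ENNReal.ofReal_toReal hD1p]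
        exact ENNReal.ofReal_le_ofReal (by linarith [ENNReal.toReal_nonneg (a := D ^ (1/p))])
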